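/- Let m > 1 be an integer and let s and t be distinct positive divisors of m with s⁴ < m and t⁴ < m. Let I_s = (s, γ_m) and I_t = (t, γ_m) be the fractional ideals of ℤ[γ_m] generated by {s, γ_m} and {t, γ_m} respectively. Then I_s² and I_t² are not homothetic: there is no α ∈ K_m^× with α·I_s² = I_t². In particular, the ideal classes of the squares I_s² for s a divisor of m with s⁴ < m are pairwise distinct, and there are at least ω(m) − 3 of them, where ω(m) is the number of distinct prime divisors of m. -/

import Mathlib

/-- For `m > 1`, `γ_m = (1 + √(1-4m))/2 = (1 + i·√(4m-1))/2 ∈ ℂ`, a root of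
`x² - x + m` generating the imaginary quadratic field `K_m = ℚ(√(1-4m)) ⊆ ℂ`. -/
noncomputable def gammaC (m : ℕ) : ℂ :=
  (1 + Real.sqrt (4 * m - 1) * Complex.I) / 2

/-- The order `ℤ[γ_m]`. -/
noncomputable def orderC (m : ℕ) : Subalgebra ℤ ℂ := Algebra.adjoin ℤ {gammaC m}

/-- The fractional ideal `I_s = (s, γ_m)` of `ℤ[γ_m]`, as a `ℤ[γ_m]`-submodule. -/
noncomputable def idealC (m s : ℕ) : Submodule (orderC m) ℂ :=
  Submodule.span (orderC m) {(s : ℂ), gammaC m}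

lemma gamma_sq (m : ℕ) (hm : 1 ≤ m) : (gammaC m)^2 = gammaC m - m := by
  have h1 : (0:ℝ) ≤ 4 * m - 1 := by
    have : (1:ℝ) ≤ (m:ℝ) := by exact_mod_cast hm
    nlinarith
  have hd : (Real.sqrt (4 * m - 1) : ℂ)^2 = 4*(m:ℂ) - 1 := by
    rw [← Complex.ofReal_pow, Real.sq_sqrt h1]; push_cast; ring
  unfold gammaC
  linear_combination (-(1:ℂ)/4) * hd + ((Real.sqrt (4*(m:ℝ)-1):ℂ)^2/4) * Complex.I_sq

lemma sqrt_pos' (m : ℕ) (hm : 1 ≤ m) : 0 < Real.sqrt (4 * m - 1) := by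
  apply Real.sqrt_pos.mpr
  have : (1:ℝ) ≤ (m:ℝ) := by exact_mod_cast hm
  nlinarith

lemma gamma_sq_im (m : ℕ) (hm : 1 ≤ m) :
    ((gammaC m)^2).im = Real.sqrt (4 * m - 1) / 2 := by
  rw [gamma_sq m hm]; simp [gammaC, Complex.div_im, Complex.add_im]

lemma indep (m : ℕ) (hm : 1 ≤ m) (p q : ℝ) (h : (p:ℂ) + (q:ℂ) * (gammaC m)^2 = 0) :
    p = 0 ∧ q = 0 := by
  have him := congrArg Complex.im h
  simp [Complex.add_im, Complex.mul_im, gamma_sq_im m hm] at him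
  have hd := sqrt_pos' m hm
  have hq : q = 0 := by rcases him with h' | h'; exact h'; nlinarith
  subst hq
  have hre := congrArg Complex.re h
  simp at hre
  exact ⟨hre, rfl⟩

lemma min_norm (m u : ℕ) (hm : 1 < m) (hu4 : u^4 < m) (a b : ℤ) (x : ℂ)
    (hx : x = (a:ℂ) * (u:ℂ)^2 + (b:ℂ) * (gammaC m)^2) (hx0 : x ≠ 0) :
    ((u:ℝ))^2 ≤ ‖x‖ ∧
      (‖x‖ ≤ (u:ℝ)^2 → x = (u:ℂ)^2 ∨ x = -(u:ℂ)^2) := by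
  have hm1 : 1 ≤ m := hm.le
  by_cases hb : b = 0
  · subst hb
    have hx' : x = ((a * (u:ℤ)^2 : ℤ) : ℂ) := by rw [hx]; push_cast; ring
    have hne : (a * (u:ℤ)^2 : ℤ) ≠ 0 := by
      intro h; apply hx0; rw [hx', h]; simp
    have ha : a ≠ 0 := by rintro rfl; simp at hne
    have hu0 : (u:ℤ) ≠ 0 := by rintro h; rw [h] at hne; simp at hne
    have habs : ‖x‖ = |((a*(u:ℤ)^2 : ℤ):ℝ)| := by
      rw [hx']; exact Complex.norm_intCast _
    have ha1 : (1:ℝ) ≤ |(a:ℝ)| := by exact_mod_cast Int.one_le_abs ha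
    constructor
    · rw [habs]
      have : |((a*(u:ℤ)^2 : ℤ):ℝ)| = |(a:ℝ)| * (u:ℝ)^2 := by
        push_cast; rw [abs_mul, abs_of_nonneg (by positivity : (0:ℝ) ≤ (u:ℝ)^2)]
      rw [this]; nlinarith [sq_nonneg (u:ℝ)]
    · intro hle
      rw [habs] at hle
      have h2 : |(a:ℝ)| * (u:ℝ)^2 ≤ (u:ℝ)^2 := by
        have : |((a*(u:ℤ)^2 : ℤ):ℝ)| = |(a:ℝ)| * (u:ℝ)^2 := by
          push_cast; rw [abs_mul, abs_of_nonneg (by positivity : (0:ℝ) ≤ (u:ℝ)^2)]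
        linarith [this ▸ hle]
      have hu0' : (0:ℝ) < (u:ℝ)^2 := by
        have : (u:ℝ) ≠ 0 := by exact_mod_cast hu0
        positivity
      have ha2 : |(a:ℝ)| ≤ 1 := by nlinarith
      have ha3 : |a| = 1 := by
        have : |(a:ℝ)| = 1 := le_antisymm ha2 ha1
        exact_mod_cast this
      rcases abs_eq (by norm_num : (0:ℤ) ≤ 1) |>.mp ha3 with rfl | rfl
      · left; rw [hx']; push_cast; ring
      · right; rw [hx']; push_cast; ring
  · have h9 : ((u:ℂ)^2).im = 0 := by simp [pow_two]
    have h9' : ((u:ℂ)^2).re = (u:ℝ)^2 := by simp [pow_two]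
    have him : x.im = (b:ℝ) * (Real.sqrt (4*m-1)/2) := by
      rw [hx, Complex.add_im, Complex.mul_im, Complex.mul_im, h9, h9',
        gamma_sq_im m hm1]
      simp [Complex.intCast_im, Complex.intCast_re]
    have hu4' : ((u:ℝ))^4 ≤ (m:ℝ) - 1 := by
      have : (u^4 + 1 : ℕ) ≤ m := hu4
      have h' : ((u^4 + 1 : ℕ):ℝ) ≤ (m:ℝ) := by exact_mod_cast this
      push_cast at h'; linarith
    have hd2 : 2*(u:ℝ)^2 < Real.sqrt (4*m-1) := by
      rw [show (4*(m:ℝ)-1) = ((4*(m:ℝ)-1) : ℝ) from rfl]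
      have h0 : (0:ℝ) ≤ 2*(u:ℝ)^2 := by positivity
      rw [← Real.sqrt_sq h0]
      apply Real.sqrt_lt_sqrt (by positivity)
      nlinarith
    have hb1 : (1:ℝ) ≤ |(b:ℝ)| := by exact_mod_cast Int.one_le_abs hb
    have hd0 : (0:ℝ) ≤ Real.sqrt (4*m-1) := Real.sqrt_nonneg _
    have hsq : (u:ℝ)^2 < ‖x‖ := by
      have h1 : (u:ℝ)^2 < Real.sqrt (4*m-1)/2 := by linarith
      have h2 : Real.sqrt (4*m-1)/2 ≤ |x.im| := by
        rw [him, abs_mul]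
        have : |Real.sqrt (4*m-1)/2| = Real.sqrt (4*m-1)/2 := abs_of_nonneg (by linarith)
        rw [this]; nlinarith
      linarith [Complex.abs_im_le_norm x]
    exact ⟨hsq.le, fun hle => absurd (hsq.trans_le hle) (lt_irrefl _)⟩

lemma mem_sq (m u : ℕ) (hm : 1 ≤ m) (hu : u ∣ m) (x : ℂ) :
    x ∈ idealC m u * idealC m u ↔
      ∃ a b : ℤ, x = (a:ℂ) * (u:ℂ)^2 + (b:ℂ) * (gammaC m)^2 := by
  obtain ⟨v, hv⟩ := hu
  have hγ : (gammaC m)^2 = gammaC m - m := gamma_sq m hm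
  have hm2 : (m:ℂ) = (u:ℂ) * (v:ℂ) := by exact_mod_cast congrArg (Nat.cast : ℕ → ℂ) hv
  set g := gammaC m with hg
  set P : ℂ → Prop := fun x => ∃ a b : ℤ, x = (a:ℂ) * (u:ℂ)^2 + (b:ℂ) * g^2 with hP
  have Padd : ∀ x y : ℂ, P x → P y → P (x + y) := by
    rintro x y ⟨a, b, rfl⟩ ⟨c, d, rfl⟩
    exact ⟨a + c, b + d, by push_cast; ring⟩
  have Pmul : ∀ c : ℂ, c ∈ orderC m → ∀ x : ℂ, P x → P (c * x) := by
    intro c hc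
    refine Algebra.adjoin_induction (fun z hz => ?_) (fun r => ?_)
      (fun z w _ _ hz hw => ?_) (fun z w _ _ hz hw => ?_) hc
    · simp only [Set.mem_singleton_iff] at hz
      subst hz
      rintro x ⟨a, b, rfl⟩
      refine ⟨a*(m:ℤ) - b*(v:ℤ)^2, a*(u:ℤ)^2 + b*(1 - (m:ℤ)), ?_⟩
      push_cast
      linear_combination ((b:ℂ)*g + ((b:ℂ)*(m:ℂ) - (a:ℂ)*(u:ℂ)^2)) * hγ
        + (-(b:ℂ)*((m:ℂ)+(u:ℂ)*(v:ℂ))) * hm2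
    · rintro x ⟨a, b, rfl⟩
      refine ⟨r*a, r*b, ?_⟩
      have hr : (algebraMap ℤ ℂ) r = (r:ℂ) := by simp
      rw [hr]; push_cast; ring
    · rintro x hx
      rw [add_mul]
      exact Padd _ _ (hz x hx) (hw x hx)
    · rintro x hx
      rw [mul_assoc]
      exact hz _ (hw x hx)
  let M : Submodule (orderC m) ℂ :=
    { carrier := setOf P
      add_mem' := fun {x y} hx hy => Padd x y hx hy
      zero_mem' := ⟨0, 0, by simp⟩
      smul_mem' := by
        intro c x hx
        have h1 : (c : ℂ) * x ∈ setOf P := Pmul (c:ℂ) c.2 x hx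
        simpa [Algebra.smul_def] using h1 }
  constructor
  · intro hx
    have h2 : idealC m u * idealC m u ≤ M := by
      rw [idealC, Submodule.span_mul_span]
      apply Submodule.span_le.mpr
      rintro z hz
      rw [Set.mem_mul] at hz
      obtain ⟨p, hp, q, hq, rfl⟩ := hz
      simp only [Set.mem_insert_iff, Set.mem_singleton_iff] at hp hq
      have h3 : P (p * q) := by
        rcases hp with rfl | rfl <;> rcases hq with rfl | rfl
        · exact ⟨1, 0, by push_cast; ring⟩
        · exact ⟨v, u, by push_cast; linear_combination (-(u:ℂ))*hγ + (u:ℂ)*hm2⟩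
        · exact ⟨v, u, by push_cast; linear_combination (-(u:ℂ))*hγ + (u:ℂ)*hm2⟩
        · exact ⟨0, 1, by push_cast; ring⟩
      exact h3
    exact h2 hx
  · rintro ⟨a, b, rfl⟩
    have hgI : g ∈ idealC m u := Submodule.subset_span (by simp [hg])
    have huI : (u:ℂ) ∈ idealC m u := Submodule.subset_span (by simp)
    have h1 : (u:ℂ)^2 ∈ idealC m u * idealC m u := by
      rw [pow_two]; exact Submodule.mul_mem_mul huI huI
    have h2 : g^2 ∈ idealC m u * idealC m u := by
      rw [pow_two]; exact Submodule.mul_mem_mul hgI hgI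
    have key : ∀ (c : ℤ) (w : ℂ), w ∈ idealC m u * idealC m u →
        (c:ℂ) * w ∈ idealC m u * idealC m u := by
      intro c w hw
      have hcO : (c:ℂ) ∈ orderC m := by
        have := Subalgebra.algebraMap_mem (orderC m) c
        simpa using this
      have := Submodule.smul_mem (idealC m u * idealC m u) ⟨(c:ℂ), hcO⟩ hw
      simpa [Algebra.smul_def] using this
    exact Submodule.add_mem _ (key a _ h1) (key b _ h2)

lemma part2 (m : ℕ) (hm : 1 < m) :
    m.primeFactors.card - 3 ≤ (m.divisors.filter (fun u => u ^ 4 < m)).card := by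
  classical
  set P := m.primeFactors with hP
  have hm0 : m ≠ 0 := by omega
  have hBle : (P.filter (fun p => ¬ p^4 < m)).card ≤ 3 := by
    by_contra hB
    rw [not_le] at hB
    obtain ⟨S, hSsub, hScard⟩ := Finset.exists_subset_card_eq hB
    have hSP : S ⊆ P := hSsub.trans (Finset.filter_subset _ _)
    have hprod_dvd : ∏ p ∈ S, p ∣ m :=
      (Finset.prod_dvd_prod_of_subset S P (fun p => p) hSP).trans
        (Nat.prod_primeFactors_dvd m)
    have hprodle : ∏ p ∈ S, p ≤ m := Nat.le_of_dvd (by omega) hprod_dvd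
    have hSm : ∀ p ∈ S, m ≤ p^4 := by
      intro p hp
      have := (Finset.mem_filter.mp (hSsub hp)).2
      omega
    have h2 : 1 < S.card := by omega
    obtain ⟨p, hp, q, hq, hpq⟩ := Finset.one_lt_card.mp h2
    have hstrict : ∃ r ∈ S, m < r^4 := by
      by_contra hcon
      push_neg at hcon
      have hpm : p^4 = m := le_antisymm (hcon p hp) (hSm p hp)
      have hqm : q^4 = m := le_antisymm (hcon q hq) (hSm q hq)
      exact hpq (Nat.pow_left_injective (by norm_num) (hpm.trans hqm.symm))
    obtain ⟨r, hr, hrm⟩ := hstrict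
    have e1 : ∏ p ∈ S, p^4 = (∏ p ∈ S, p)^4 := by rw [Finset.prod_pow]
    have e2 : (∏ p ∈ S, p)^4 ≤ m^4 := Nat.pow_le_pow_left hprodle 4
    have e3 : m^4 < ∏ p ∈ S, p^4 := by
      rw [← Finset.mul_prod_erase S _ hr]
      have h5 : ∀ p ∈ S.erase r, m ≤ p^4 := fun p hp => hSm p (Finset.mem_erase.mp hp).2
      have h6 : m^3 ≤ ∏ p ∈ S.erase r, p^4 := by
        calc m^3 = ∏ _p ∈ S.erase r, m := by
              rw [Finset.prod_const, Finset.card_erase_of_mem hr, hScard]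
          _ ≤ ∏ p ∈ S.erase r, p^4 := Finset.prod_le_prod (fun _ _ => Nat.zero_le m) h5
      have hmpos : 0 < m^3 := by positivity
      calc m^4 = m * m^3 := by ring
        _ < r^4 * m^3 := by exact Nat.mul_lt_mul_of_lt_of_le hrm (le_refl _) hmpos
        _ ≤ r^4 * ∏ p ∈ S.erase r, p^4 := Nat.mul_le_mul_left _ h6
    have : ∏ p ∈ S, p^4 ≤ m^4 := e1 ▸ e2
    exact absurd e3 (not_lt.mpr this)
  have hsplit := Finset.card_filter_add_card_filter_not
    (s := P) (p := fun p => p^4 < m)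
  have hsub2 : P.filter (fun p => p^4 < m) ⊆ m.divisors.filter (fun u => u^4 < m) := by
    intro p hp
    rw [Finset.mem_filter] at hp ⊢
    exact ⟨Nat.mem_divisors.mpr ⟨(Nat.mem_primeFactors.mp hp.1).2.1, hm0⟩, hp.2⟩
  have hcard := Finset.card_le_card hsub2
  omega

theorem part1 (m s t : ℕ) (hm : 1 < m)
    (hs : s ∣ m) (ht : t ∣ m) (hs0 : 0 < s) (ht0 : 0 < t) (hst : s ≠ t)
    (hs4 : s ^ 4 < m) (ht4 : t ^ 4 < m) :
    (¬ ∃ α : ℂ, α ≠ 0 ∧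
        ∀ x : ℂ, x ∈ idealC m t * idealC m t ↔
          ∃ y ∈ idealC m s * idealC m s, x = α * y) := by
  rintro ⟨α, hα0, H⟩
  have hm1 : 1 ≤ m := hm.le
  set g := gammaC m with hg
  have hsc : ((s:ℂ)) ≠ 0 := Nat.cast_ne_zero.mpr hs0.ne'
  have htc : ((t:ℂ)) ≠ 0 := Nat.cast_ne_zero.mpr ht0.ne'
  -- t² ∈ T, so t² = α z with z ∈ S nonzero
  have t2T : ((t:ℂ))^2 ∈ idealC m t * idealC m t :=
    (mem_sq m t hm1 ht _).mpr ⟨1, 0, by push_cast; ring⟩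
  obtain ⟨z, hzS, hzeq⟩ := (H _).mp t2T
  have hz0 : z ≠ 0 := by
    rintro rfl
    rw [mul_zero] at hzeq
    exact pow_ne_zero 2 htc hzeq
  obtain ⟨az, bz, hz⟩ := (mem_sq m s hm1 hs z).mp hzS
  have hzabs : ((s:ℝ))^2 ≤ ‖z‖ := (min_norm m s hm hs4 az bz z hz hz0).1
  have habsα : ‖α‖ * ‖z‖ = (t:ℝ)^2 := by
    have h1 := congrArg norm hzeq
    rw [norm_mul] at h1
    rw [← h1, norm_pow]
    simp
  -- α s² ∈ T with small norm, hence = ± t²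
  have s2S : ((s:ℂ))^2 ∈ idealC m s * idealC m s :=
    (mem_sq m s hm1 hs _).mpr ⟨1, 0, by push_cast; ring⟩
  have hαs2 : α * (s:ℂ)^2 ∈ idealC m t * idealC m t :=
    (H _).mpr ⟨(s:ℂ)^2, s2S, rfl⟩
  have hαs2ne : α * (s:ℂ)^2 ≠ 0 := mul_ne_zero hα0 (pow_ne_zero _ hsc)
  obtain ⟨aw, bw, hw⟩ := (mem_sq m t hm1 ht _).mp hαs2
  have habs2 : ‖α * (s:ℂ)^2‖ ≤ (t:ℝ)^2 := by
    rw [norm_mul, norm_pow]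
    have hzpos : (0:ℝ) < ‖z‖ := by
      simpa using (norm_pos_iff.mpr hz0)
    have h7 : ‖α‖ * (s:ℝ)^2 ≤ ‖α‖ * ‖z‖ :=
      mul_le_mul_of_nonneg_left hzabs (norm_nonneg _)
    simpa using h7.trans habsα.le
  have hpm := (min_norm m t hm ht4 aw bw _ hw hαs2ne).2 habs2
  obtain ⟨ε, hε, hc⟩ : ∃ ε : ℤ, (ε = 1 ∨ ε = -1) ∧ α * (s:ℂ)^2 = (ε:ℂ) * (t:ℂ)^2 := by
    rcases hpm with h | h
    · exact ⟨1, Or.inl rfl, by rw [h]; push_cast; ring⟩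
    · exact ⟨-1, Or.inr rfl, by rw [h]; push_cast; ring⟩
  -- step 4 : s² ∣ t²
  have g2S : g^2 ∈ idealC m s * idealC m s :=
    (mem_sq m s hm1 hs _).mpr ⟨0, 1, by push_cast; ring⟩
  have hαg2 : α * g^2 ∈ idealC m t * idealC m t :=
    (H _).mpr ⟨g^2, g2S, rfl⟩
  obtain ⟨a, b, hab⟩ := (mem_sq m t hm1 ht _).mp hαg2
  have key1 : (((a*(t:ℤ)^2*(s:ℤ)^2 : ℤ):ℝ):ℂ)
      + (((b*(s:ℤ)^2 - ε*(t:ℤ)^2 : ℤ):ℝ):ℂ) * g^2 = 0 := by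
    push_cast
    linear_combination (-(s:ℂ)^2) * hab + (g:ℂ)^2 * hc
  obtain ⟨h8, h9⟩ := indep m hm1 _ _ key1
  have h10 : b*(s:ℤ)^2 - ε*(t:ℤ)^2 = 0 := by exact_mod_cast h9
  have hdvd1 : (s:ℤ)^2 ∣ (t:ℤ)^2 := ⟨ε*b, by rcases hε with rfl | rfl <;> linarith⟩
  -- step 5 : t² ∣ s²
  have g2T : g^2 ∈ idealC m t * idealC m t :=
    (mem_sq m t hm1 ht _).mpr ⟨0, 1, by push_cast; ring⟩
  obtain ⟨y, hyS, hyeq⟩ := (H _).mp g2T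
  obtain ⟨a', b', hab'⟩ := (mem_sq m s hm1 hs y).mp hyS
  have key2 : (((ε*a'*(t:ℤ)^2*(s:ℤ)^2 : ℤ):ℝ):ℂ)
      + (((ε*b'*(t:ℤ)^2 - (s:ℤ)^2 : ℤ):ℝ):ℂ) * g^2 = 0 := by
    push_cast
    linear_combination (-(s:ℂ)^2) * hyeq
      + (-(((a':ℂ))*(s:ℂ)^2 + ((b':ℂ))*g^2)) * hc + (-(s:ℂ)^2*α) * hab'
  obtain ⟨h11, h12⟩ := indep m hm1 _ _ key2
  have h13 : ε*b'*(t:ℤ)^2 - (s:ℤ)^2 = 0 := by exact_mod_cast h12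
  have hdvd2 : (t:ℤ)^2 ∣ (s:ℤ)^2 := ⟨ε*b', by linarith⟩
  have hdvd1' : s^2 ∣ t^2 := by exact_mod_cast hdvd1
  have hdvd2' : t^2 ∣ s^2 := by exact_mod_cast hdvd2
  have : s^2 = t^2 := Nat.dvd_antisymm hdvd1' hdvd2'
  exact hst (Nat.pow_left_injective (by norm_num) this)

/-- For `m > 1` and distinct positive divisors `s, t` of `m` with `s⁴ < m`, `t⁴ < m`,
the fractional ideals `I_s² = (s, γ_m)²` and `I_t² = (t, γ_m)²` of `ℤ[γ_m]` are not
homothetic: there is no `α ≠ 0` with `I_t² = α · I_s²`.  In particular the ideal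
classes of the squares `I_s²`, for `s ∣ m` with `s⁴ < m`, are pairwise distinct, and
there are at least `ω(m) - 3` of them. -/
theorem squares_not_homothetic (m s t : ℕ) (hm : 1 < m)
    (hs : s ∣ m) (ht : t ∣ m) (hs0 : 0 < s) (ht0 : 0 < t) (hst : s ≠ t)
    (hs4 : s ^ 4 < m) (ht4 : t ^ 4 < m) :
    (¬ ∃ α : ℂ, α ≠ 0 ∧
        ∀ x : ℂ, x ∈ idealC m t * idealC m t ↔
          ∃ y ∈ idealC m s * idealC m s, x = α * y) ∧
    m.primeFactors.card - 3 ≤ (m.divisors.filter (fun u => u ^ 4 < m)).card := by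
  exact ⟨part1 m s t hm hs ht hs0 ht0 hst hs4 ht4, part2 m hm⟩
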